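/- In the one-to-one infection network system with r_1 > r_2 > ... > r_n: (a) if limsup_{t→∞} H_i(t) < 1/e_i then P_i(t) → 0; (b) if i < j, H_i(0) > 0, and limsup_{t→∞}(P_i(t) − P_j(t)) < r_i − r_j, then H_j(t) → 0. -/

import Mathlib

open Filter Finset

/-- `Q̃_n = Σ_i a_i/e_i`. -/
noncomputable def QOIN (n : ℕ) (a e : ℕ → ℝ) : ℝ :=
  ∑ i ∈ Finset.range n, a i / e i

/-- `(h, p)` is an equilibrium of the one-to-one infection network system
`H_i' = H_i(r_i − Σ_j a_j H_j) − H_i P_i`, `P_i' = e_i n_i P_i(H_i − 1/e_i)`. -/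
def isEqOIN (n : ℕ) (r a e ν : ℕ → ℝ) (h p : ℕ → ℝ) : Prop :=
  (∀ i < n, h i * (r i - ∑ j ∈ Finset.range n, a j * h j) - h i * p i = 0) ∧
  (∀ i < n, e i * ν i * p i * (h i - 1 / e i) = 0)

/-- `(H, P)` solves the one-to-one infection network system for `t ≥ 0`. -/
def isSolOIN (n : ℕ) (r a e ν : ℕ → ℝ) (H P : ℝ → ℕ → ℝ) : Prop :=
  ∀ t ≥ (0:ℝ), ∀ i < n,
    HasDerivAt (fun s => H s i)
      (H t i * (r i - ∑ j ∈ Finset.range n, a j * H t j) - H t i * P t i) t ∧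
    HasDerivAt (fun s => P s i)
      (e i * ν i * P t i * (H t i - 1 / e i)) t


lemma expMul_antitone (f f' : ℝ → ℝ) (lam T : ℝ)
    (hderiv : ∀ t ≥ T, HasDerivAt f (f' t) t)
    (hle : ∀ t ≥ T, f' t + lam * f t ≤ 0) :
    AntitoneOn (fun t => f t * Real.exp (lam * t)) (Set.Ici T) := by
  have hexp : ∀ t : ℝ, HasDerivAt (fun s => Real.exp (lam * s)) (lam * Real.exp (lam * t)) t := by
    intro t
    have h := ((hasDerivAt_id t).const_mul lam).exp
    convert h using 1
    all_goals simp [mul_comm]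
  have hg : ∀ t ≥ T, HasDerivAt (fun t => f t * Real.exp (lam * t))
      (f' t * Real.exp (lam * t) + f t * (lam * Real.exp (lam * t))) t :=
    fun t ht => (hderiv t ht).mul (hexp t)
  apply antitoneOn_of_deriv_nonpos (convex_Ici T)
  · exact fun t ht => ((hg t ht).continuousAt).continuousWithinAt
  · intro t ht
    rw [interior_Ici] at ht
    exact (hg t (le_of_lt ht)).differentiableAt.differentiableWithinAt
  · intro t ht
    rw [interior_Ici] at ht
    rw [(hg t (le_of_lt ht)).deriv]
    have h1 := hle t (le_of_lt ht)
    have h2 := Real.exp_pos (lam * t)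
    nlinarith

lemma expMul_monotone (f f' : ℝ → ℝ) (lam T : ℝ)
    (hderiv : ∀ t ≥ T, HasDerivAt f (f' t) t)
    (hle : ∀ t ≥ T, 0 ≤ f' t + lam * f t) :
    MonotoneOn (fun t => f t * Real.exp (lam * t)) (Set.Ici T) := by
  have h := expMul_antitone (fun t => -f t) (fun t => -f' t) lam T
    (fun t ht => (hderiv t ht).neg)
    (fun t ht => by have := hle t ht; linarith)
  intro x hx y hy hxy
  have := h hx hy hxy
  dsimp only at this ⊢
  simp only [neg_mul] at this
  linarith

lemma exp_decay (f f' : ℝ → ℝ) (lam T : ℝ) (hlam : 0 < lam)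
    (hderiv : ∀ t ≥ T, HasDerivAt f (f' t) t)
    (hnn : ∀ t ≥ T, 0 ≤ f t)
    (hle : ∀ t ≥ T, f' t + lam * f t ≤ 0) :
    Tendsto f atTop (nhds 0) := by
  have hanti := expMul_antitone f f' lam T hderiv hle
  set C := f T * Real.exp (lam * T) with hC
  have hbound : ∀ t ≥ T, f t ≤ C * Real.exp (-(lam * t)) := by
    intro t ht
    have h2 : f t * Real.exp (lam * t) ≤ C := hanti (Set.self_mem_Ici) ht ht
    have h3 := mul_le_mul_of_nonneg_right h2 (le_of_lt (Real.exp_pos (-(lam * t))))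
    calc f t = f t * Real.exp (lam * t) * Real.exp (-(lam * t)) := by
            rw [mul_assoc, ← Real.exp_add]; simp
      _ ≤ C * Real.exp (-(lam * t)) := h3
  have hmul : Tendsto (fun t : ℝ => lam * t) atTop atTop :=
    Tendsto.const_mul_atTop hlam tendsto_id
  have h1 : Tendsto (fun t : ℝ => -(lam * t)) atTop atBot :=
    tendsto_neg_atTop_atBot.comp hmul
  have h2 : Tendsto (fun t : ℝ => Real.exp (-(lam * t))) atTop (nhds 0) :=
    Real.tendsto_exp_atBot.comp h1
  have htend : Tendsto (fun t => C * Real.exp (-(lam * t))) atTop (nhds 0) := by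
    simpa using h2.const_mul C
  exact squeeze_zero' (eventually_atTop.mpr ⟨T, hnn⟩) (eventually_atTop.mpr ⟨T, hbound⟩) htend

/-- in the one-to-one infection network system with `r_1 > ⋯ > r_n`:
(a) if `limsup H_i < 1/e_i` then `P_i → 0`; (b) if `i < j`, `H_i(0) > 0` and
`limsup (P_i − P_j) < r_i − r_j` then `H_j → 0`. -/
theorem statement16
    (n : ℕ) (r a e ν : ℕ → ℝ)
    (hr : ∀ i < n, 0 < r i) (ha : ∀ i < n, 0 < a i)
    (he : ∀ i < n, 0 < e i) (hν : ∀ i < n, 0 < ν i)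
    (hrord : ∀ i, i + 1 < n → r (i + 1) < r i)
    (H P : ℝ → ℕ → ℝ) (hsol : isSolOIN n r a e ν H P)
    (hpos : ∀ t ≥ (0:ℝ), ∀ k < n, 0 ≤ H t k ∧ 0 ≤ P t k)
    (hbdd : ∃ B : ℝ, ∀ t ≥ (0:ℝ), ∀ k < n, H t k ≤ B ∧ P t k ≤ B) :
    (∀ i < n, Filter.limsup (fun t => H t i) Filter.atTop < 1 / e i →
      Filter.Tendsto (fun t => P t i) Filter.atTop (nhds 0)) ∧
    (∀ i j, i < j → j < n → 0 < H 0 i →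
      Filter.limsup (fun t => P t i - P t j) Filter.atTop < r i - r j →
      Filter.Tendsto (fun t => H t j) Filter.atTop (nhds 0)) := by
  obtain ⟨B, hB⟩ := hbdd
  constructor
  · -- part (a)
    intro i hi hlim
    set L := limsup (fun t => H t i) atTop with hL
    set b := (L + 1 / e i) / 2 with hb
    have hb1 : L < b := by simp only [hb]; linarith
    have hb2 : b < 1 / e i := by simp only [hb]; linarith
    have hbddu : IsBoundedUnder (· ≤ ·) atTop (fun t => H t i) :=
      ⟨B, eventually_map.mpr <| (eventually_ge_atTop (0:ℝ)).mono fun t ht => (hB t ht i hi).1⟩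
    have hev : ∀ᶠ t in atTop, H t i < b := eventually_lt_of_limsup_lt hb1 hbddu
    obtain ⟨T, hT⟩ := eventually_atTop.mp (hev.and (eventually_ge_atTop (0:ℝ)))
    set lam := e i * ν i * (1 / e i - b) with hlam
    have heν : 0 < e i * ν i := mul_pos (he i hi) (hν i hi)
    have hlam0 : 0 < lam := mul_pos heν (by linarith)
    apply exp_decay (fun t => P t i) (fun t => e i * ν i * P t i * (H t i - 1 / e i)) lam T hlam0
    · intro t ht; exact (hsol t (hT t ht).2 i hi).2
    · intro t ht; exact (hpos t (hT t ht).2 i hi).2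
    · intro t ht
      have h1 := (hT t ht).1
      have h2 := (hpos t (hT t ht).2 i hi).2
      have : e i * ν i * P t i * (H t i - 1 / e i) + lam * P t i
          = (e i * ν i * P t i) * (H t i - b) := by rw [hlam]; ring
      rw [this]
      exact mul_nonpos_of_nonneg_of_nonpos (by positivity) (by linarith)
  · -- part (b)
    intro i j hij hjn hH0 hlim
    have hin : i < n := hij.trans hjn
    have hB0 : 0 ≤ B := le_trans (hpos 0 le_rfl j hjn).1 (hB 0 le_rfl j hjn).1
    set M := (∑ k ∈ range n, a k * B) + B + |r i| with hM
    -- H i stays positive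
    have hSle : ∀ t ≥ (0:ℝ), ∑ k ∈ range n, a k * H t k ≤ ∑ k ∈ range n, a k * B := by
      intro t ht
      apply Finset.sum_le_sum
      intro k hk
      have hkn := Finset.mem_range.mp hk
      exact mul_le_mul_of_nonneg_left (hB t ht k hkn).1 (le_of_lt (ha k hkn))
    have hHpos : ∀ t ≥ (0:ℝ), 0 < H t i := by
      have hmono := expMul_monotone (fun t => H t i)
        (fun t => H t i * (r i - ∑ k ∈ range n, a k * H t k) - H t i * P t i) M 0
        (fun t ht => (hsol t ht i hin).1)
        (by
          intro t ht
          have h1 := hSle t ht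
          have h2 := (hpos t ht i hin).1
          have h3 := (hB t ht i hin).2
          have h4 : -|r i| ≤ r i := neg_abs_le (r i)
          have : H t i * (r i - ∑ k ∈ range n, a k * H t k) - H t i * P t i + M * H t i
              = H t i * ((r i - ∑ k ∈ range n, a k * H t k) - P t i + M) := by ring
          rw [this]
          apply mul_nonneg h2
          rw [hM]; linarith)
      intro t ht
      have := hmono Set.self_mem_Ici ht ht
      dsimp only at this
      simp only [mul_zero, Real.exp_zero, mul_one] at this
      have hexp := Real.exp_pos (M * t)
      nlinarith
    -- the ratio ψ = H j / H i decays
    set L := limsup (fun t => P t i - P t j) atTop with hL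
    set c := (L + (r i - r j)) / 2 with hc
    have hc1 : L < c := by simp only [hc]; linarith
    set lam := (r i - r j) - c with hlamd
    have hlam0 : 0 < lam := by simp only [hlamd, hc]; linarith
    have hbddu : IsBoundedUnder (· ≤ ·) atTop (fun t => P t i - P t j) :=
      ⟨B, eventually_map.mpr <| (eventually_ge_atTop (0:ℝ)).mono fun t ht => by
        have := (hB t ht i hin).2; have := (hpos t ht j hjn).2; linarith⟩
    have hev : ∀ᶠ t in atTop, P t i - P t j < c := eventually_lt_of_limsup_lt hc1 hbddu
    obtain ⟨T, hT⟩ := eventually_atTop.mp (hev.and (eventually_ge_atTop (0:ℝ)))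
    set ψ := fun t => H t j / H t i with hψ
    set F := fun t => ((H t j * (r j - ∑ k ∈ range n, a k * H t k) - H t j * P t j) * H t i
        - H t j * (H t i * (r i - ∑ k ∈ range n, a k * H t k) - H t i * P t i)) / (H t i) ^ 2
      with hF
    have hψtend : Tendsto ψ atTop (nhds 0) := by
      apply exp_decay ψ F lam T hlam0
      · intro t ht
        have ht0 : (0:ℝ) ≤ t := (hT t ht).2
        exact ((hsol t ht0 j hjn).1).div ((hsol t ht0 i hin).1) (ne_of_gt (hHpos t ht0))
      · intro t ht
        have ht0 : (0:ℝ) ≤ t := (hT t ht).2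
        exact div_nonneg (hpos t ht0 j hjn).1 (le_of_lt (hHpos t ht0))
      · intro t ht
        have ht0 : (0:ℝ) ≤ t := (hT t ht).2
        have hHi := hHpos t ht0
        have hHine : H t i ≠ 0 := ne_of_gt hHi
        have hkey : F t = ψ t * ((r j - r i) - (P t j - P t i)) := by
          simp only [hF, hψ]
          field_simp
          ring
        have hψnn : 0 ≤ ψ t := div_nonneg (hpos t ht0 j hjn).1 (le_of_lt hHi)
        have hPc := (hT t ht).1
        have h1 : (r j - r i) - (P t j - P t i) ≤ -lam := by simp only [hlamd]; linarith
        rw [hkey]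
        nlinarith
    -- squeeze H j
    have hsq : ∀ t ≥ T, H t j ≤ B * ψ t := by
      intro t ht
      have ht0 : (0:ℝ) ≤ t := (hT t ht).2
      have hHi := hHpos t ht0
      have hψnn : 0 ≤ ψ t := div_nonneg (hpos t ht0 j hjn).1 (le_of_lt hHi)
      have : H t j = ψ t * H t i := by rw [hψ]; exact (div_mul_cancel₀ _ (ne_of_gt hHi)).symm
      rw [this]
      calc ψ t * H t i ≤ ψ t * B := mul_le_mul_of_nonneg_left (hB t ht0 i hin).1 hψnn
        _ = B * ψ t := mul_comm _ _
    have htend : Tendsto (fun t => B * ψ t) atTop (nhds 0) := by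
      simpa using hψtend.const_mul B
    refine squeeze_zero' ?_ (eventually_atTop.mpr ⟨T, hsq⟩) htend
    exact (eventually_ge_atTop (0:ℝ)).mono fun t ht => (hpos t ht j hjn).1
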